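/- arXiv:2601.20754 — 3 statements merged into one kernel-verified Lean document; each statement's English description precedes it below -/
import Mathlib

section
/- Let l ≥ 1 be an integer and let b_0, b_1, …, b_l ∈ (0, ∞). Then there exists c ∈ (0, ∞) such that for every t ∈ [c, ∞) there exists a real polynomial w_t of degree exactly l+1 satisfying: w_t(n) = b_n for every integer n with 0 ≤ n ≤ l; w_t(l+1) = t; and w_t(n) > 0 for every integer n ≥ l+2. -/
open Polynomial

/-- Bound on a polynomial evaluation by the sum of absolute values of coefficients. -/
lemma aux_eval_abs_le (p : Polynomial ℝ) (d : ℕ) (hd : p.natDegree ≤ d) (x : ℝ) (hx : 1 ≤ x) :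
    |p.eval x| ≤ (∑ i ∈ Finset.range (d + 1), |p.coeff i|) * x ^ d := by
  rw [Polynomial.eval_eq_sum_range' (Nat.lt_succ_of_le hd)]
  calc |∑ i ∈ Finset.range (d + 1), p.coeff i * x ^ i|
      ≤ ∑ i ∈ Finset.range (d + 1), |p.coeff i * x ^ i| :=
        Finset.abs_sum_le_sum_abs _ _
    _ ≤ ∑ i ∈ Finset.range (d + 1), |p.coeff i| * x ^ d := by
        apply Finset.sum_le_sum
        intro i hi
        rw [abs_mul, abs_pow, abs_of_nonneg (by linarith : (0:ℝ) ≤ x)]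
        exact mul_le_mul_of_nonneg_left
          (pow_le_pow_right₀ hx (by simpa using Nat.lt_succ_iff.mp (Finset.mem_range.mp hi)))
          (abs_nonneg _)
    _ = _ := by rw [← Finset.sum_mul]

/-- `n ^ (l+1) ≤ (l+1)^(l+1) * descFactorial n (l+1)` for `n ≥ l + 1`. -/
lemma aux_pow_le_descFactorial (l n : ℕ) (hn : l + 1 ≤ n) :
    n ^ (l + 1) ≤ (l + 1) ^ (l + 1) * n.descFactorial (l + 1) := by
  have h1 : (n - l) ^ (l + 1) ≤ n.descFactorial (l + 1) := by
    have := n.pow_sub_le_descFactorial (l + 1)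
    have he : n + 1 - (l + 1) = n - l := by omega
    rwa [he] at this
  have h2 : n ≤ (l + 1) * (n - l) := by
    have hl1 : 1 ≤ n - l := by omega
    calc n = l + (n - l) := by omega
      _ ≤ l * (n - l) + (n - l) := by
          have : l ≤ l * (n - l) := Nat.le_mul_of_pos_right l (by omega)
          omega
      _ = (l + 1) * (n - l) := by ring
  calc n ^ (l + 1) ≤ ((l + 1) * (n - l)) ^ (l + 1) := Nat.pow_le_pow_left h2 _
    _ = (l + 1) ^ (l + 1) * (n - l) ^ (l + 1) := mul_pow _ _ _
    _ ≤ (l + 1) ^ (l + 1) * n.descFactorial (l + 1) := Nat.mul_le_mul_left _ h1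

/-- Lemma of Jabłoński–Kośmider.
Let `l ≥ 1` and `b₀, …, b_l ∈ (0, ∞)`. Then there exists `c ∈ (0, ∞)` such that for every
`t ∈ [c, ∞)` there is a real polynomial `w_t` of degree exactly `l + 1` with `w_t(n) = b_n`
for `0 ≤ n ≤ l`, `w_t(l+1) = t`, and `w_t(n) > 0` for all integers `n ≥ l + 2`. -/
theorem stmt0 (l : ℕ) (hl : 1 ≤ l) (b : ℕ → ℝ) (hb : ∀ n, n ≤ l → 0 < b n) :
    ∃ c : ℝ, 0 < c ∧ ∀ t : ℝ, c ≤ t →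
      ∃ w : Polynomial ℝ,
        w.natDegree = l + 1 ∧
        (∀ n : ℕ, n ≤ l → w.eval (n : ℝ) = b n) ∧
        w.eval ((l : ℝ) + 1) = t ∧
        (∀ n : ℕ, l + 2 ≤ n → 0 < w.eval (n : ℝ)) := by
  classical
  set v : ℕ → ℝ := fun i => (i : ℝ) with hv
  have hinj : Set.InjOn v (Finset.range (l + 1)) := fun a _ b _ h => Nat.cast_injective h
  set p : Polynomial ℝ := Lagrange.interpolate (Finset.range (l + 1)) v b with hp
  have hpdeg : p.degree < ((l + 1 : ℕ) : WithBot ℕ) := by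
    have := Lagrange.degree_interpolate_lt b hinj
    rw [Finset.card_range] at this
    exact this
  have hpnat : p.natDegree ≤ l := by
    by_cases hp0 : p = 0
    · simp [hp0]
    · have := (Polynomial.natDegree_lt_iff_degree_lt hp0).mpr hpdeg
      omega
  set D : Polynomial ℝ := descPochhammer ℝ (l + 1) with hD
  have hDmonic : D.Monic := monic_descPochhammer ℝ (l + 1)
  have hDdeg : D.natDegree = l + 1 := descPochhammer_natDegree ℝ (l + 1)
  have hDeval : ∀ n : ℕ, D.eval (n : ℝ) = (n.descFactorial (l + 1) : ℝ) := fun n =>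
    descPochhammer_eval_eq_descFactorial ℝ n (l + 1)
  set A : ℝ := ∑ i ∈ Finset.range (l + 1), |p.coeff i| with hA
  have hA0 : 0 ≤ A := Finset.sum_nonneg fun i _ => abs_nonneg _
  set s₀ : ℝ := (A + 1) * ((l : ℝ) + 1) ^ (l + 1) with hs₀
  have hs₀pos : 0 < s₀ := by positivity
  set P1 : ℝ := p.eval ((l : ℝ) + 1) with hP1
  have hfacpos : (0 : ℝ) < ((l + 1).factorial : ℝ) := by
    exact_mod_cast (l + 1).factorial_pos
  refine ⟨max 1 (P1 + ((l + 1).factorial : ℝ) * s₀), lt_of_lt_of_le one_pos (le_max_left _ _),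
    fun t ht => ?_⟩
  set s : ℝ := (t - P1) / ((l + 1).factorial : ℝ) with hs
  have hts : P1 + ((l + 1).factorial : ℝ) * s₀ ≤ t := le_trans (le_max_right _ _) ht
  have hss₀ : s₀ ≤ s := by
    rw [hs, le_div_iff₀ hfacpos]
    nlinarith
  have hspos : 0 < s := lt_of_lt_of_le hs₀pos hss₀
  refine ⟨p + Polynomial.C s * D, ?_, ?_, ?_, ?_⟩
  · -- degree
    have hdeg2 : (Polynomial.C s * D).degree = ((l + 1 : ℕ) : WithBot ℕ) := by
      rw [Polynomial.degree_mul, Polynomial.degree_C (ne_of_gt hspos), zero_add,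
        Polynomial.degree_eq_natDegree hDmonic.ne_zero, hDdeg]
    have : (p + Polynomial.C s * D).degree = ((l + 1 : ℕ) : WithBot ℕ) := by
      rw [Polynomial.degree_add_eq_right_of_degree_lt, hdeg2]
      rw [hdeg2]; exact hpdeg
    rw [Polynomial.natDegree, this]
    rfl
  · -- values at 0..l
    intro n hn
    have hmem : n ∈ Finset.range (l + 1) := Finset.mem_range.mpr (by omega)
    have h1 : p.eval ((n : ℝ)) = b n := by
      have := Lagrange.eval_interpolate_at_node b hinj hmem
      exact this
    have hz : n.descFactorial (l + 1) = 0 :=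
      Nat.descFactorial_eq_zero_iff_lt.mpr (by omega)
    have h2 : D.eval ((n : ℝ)) = 0 := by
      rw [hDeval, hz, Nat.cast_zero]
    simp [h1, h2]
  · -- value at l + 1
    have hcast : ((l : ℝ) + 1) = (((l + 1 : ℕ) : ℝ)) := by push_cast; ring
    have h2 : D.eval ((l : ℝ) + 1) = ((l + 1).factorial : ℝ) := by
      rw [hcast, hDeval, Nat.descFactorial_self]
    simp only [Polynomial.eval_add, Polynomial.eval_mul, Polynomial.eval_C, h2, ← hP1]
    rw [hs]
    field_simp
    ring
  · -- positivity for n ≥ l + 2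
    intro n hn
    have hn1 : (1 : ℝ) ≤ (n : ℝ) := by exact_mod_cast Nat.one_le_iff_ne_zero.mpr (by omega)
    have habs : |p.eval (n : ℝ)| ≤ A * (n : ℝ) ^ l :=
      aux_eval_abs_le p l hpnat _ hn1
    have hkey : ((n : ℝ)) ^ (l + 1) ≤ ((l : ℝ) + 1) ^ (l + 1) * (n.descFactorial (l + 1) : ℝ) := by
      have := aux_pow_le_descFactorial l n (by omega)
      have := (Nat.cast_le (α := ℝ)).mpr this
      push_cast at this ⊢
      convert this using 2
    have hdF0 : (0 : ℝ) ≤ (n.descFactorial (l + 1) : ℝ) := by positivity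
    have hnl : (n : ℝ) ^ l ≤ (n : ℝ) ^ (l + 1) := by
      calc (n : ℝ) ^ l = (n : ℝ) ^ l * 1 := by ring
        _ ≤ (n : ℝ) ^ l * (n : ℝ) := by
            apply mul_le_mul_of_nonneg_left hn1 (by positivity)
        _ = (n : ℝ) ^ (l + 1) := by ring
    have hmain : (A + 1) * (n : ℝ) ^ l ≤ s * (n.descFactorial (l + 1) : ℝ) := by
      have h1 : s₀ * (n.descFactorial (l + 1) : ℝ) ≤ s * (n.descFactorial (l + 1) : ℝ) :=
        mul_le_mul_of_nonneg_right hss₀ hdF0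
      have h2 : (A + 1) * ((n : ℝ)) ^ (l + 1) ≤ s₀ * (n.descFactorial (l + 1) : ℝ) := by
        rw [hs₀, mul_assoc]
        exact mul_le_mul_of_nonneg_left hkey (by linarith)
      have h3 : (A + 1) * (n : ℝ) ^ l ≤ (A + 1) * (n : ℝ) ^ (l + 1) :=
        mul_le_mul_of_nonneg_left hnl (by linarith)
      linarith
    have hpl : -(A * (n : ℝ) ^ l) ≤ p.eval (n : ℝ) := neg_abs_le _ |>.trans' (by
      simpa using neg_le_neg habs)
    have hpow : (0 : ℝ) < (n : ℝ) ^ l := by positivity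
    simp only [Polynomial.eval_add, Polynomial.eval_mul, Polynomial.eval_C, hDeval]
    nlinarith [abs_le.mp habs]
end

section
/- Let m ≥ 1, l ≥ 1 and k ≥ 1 be integers with l ≤ k + m − 2, and let λ_1, …, λ_l ∈ (0, ∞). Then for every choice of additional positive reals λ_{l+1}, …, λ_{k+m−2}, there exists a bounded sequence (λ_n)_{n≥1} ⊂ (0, ∞) whose first k+m−2 terms are λ_1, …, λ_{k+m−2} such that the unilateral weighted shift S_λ is a strict k-quasi-m-isometry; in particular, λ_1, …, λ_l admits a strict k-quasi-m-isometric completion. -/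
noncomputable section

variable {E : Type*} [NormedAddCommGroup E] [InnerProductSpace ℂ E] [CompleteSpace E]

/-- `B_m(T) = Σ_{j=0}^m (−1)^j C(m,j) T*^(m−j) T^(m−j)`. -/
def Bop (m : ℕ) (T : E →L[ℂ] E) : E →L[ℂ] E :=
  ∑ j ∈ Finset.range (m + 1),
    ((-1 : ℂ) ^ j * (m.choose j : ℂ)) •
      ((ContinuousLinearMap.adjoint T) ^ (m - j) * T ^ (m - j))

/-- `T` is `k`-quasi-`m`-isometric if `T*^k B_m(T) T^k = 0`. -/
def IsQuasiIsometric (k m : ℕ) (T : E →L[ℂ] E) : Prop :=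
  (ContinuousLinearMap.adjoint T) ^ k * Bop m T * T ^ k = 0

/-- The Hilbert space ℓ²(ℕ). -/
abbrev ellTwo : Type := lp (fun _ : ℕ => ℂ) 2

/-- The standard orthonormal basis vectors of ℓ²(ℕ). -/
def stdVec (n : ℕ) : ellTwo := lp.single 2 n 1

/-- `S` is the unilateral weighted shift with weights `(λ_n)_{n ≥ 1}`:
`S e_n = λ_{n+1} e_{n+1}`. -/
def IsWeightedShift (lam : ℕ → ℝ) (S : ellTwo →L[ℂ] ellTwo) : Prop :=
  ∀ n : ℕ, S (stdVec n) = (lam (n + 1) : ℂ) • stdVec (n + 1)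

/-- `(βλ)_s = Π_{i=1}^s λ_i²` (with `(βλ)_0 = 1`). -/
def betaSeq (lam : ℕ → ℝ) (s : ℕ) : ℝ :=
  ∏ i ∈ Finset.Icc 1 s, (lam i) ^ 2

/-- `lam'` is a completion of the initial weight data `lam` given on indices `1, …, l`:
it is a bounded sequence of positive reals agreeing with `lam` on `1, …, l`. -/
def IsWeightCompletion (l : ℕ) (lam lam' : ℕ → ℝ) : Prop :=
  (∀ n : ℕ, 0 < lam' n) ∧ (∃ C : ℝ, ∀ n : ℕ, lam' n ≤ C) ∧
    ∀ n : ℕ, 1 ≤ n → n ≤ l → lam' n = lam n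


open Finset
open scoped fwdDiff ComplexConjugate ENNReal

namespace QMIAux

def acoef (M : ℕ) (g : ℕ → ℝ) : ℕ → ℝ
  | r =>
    if r < M then
      g r - ∑ i ∈ (Finset.range r).attach,
        acoef M g i * ((r.choose i : ℕ) : ℝ)
    else 0
  decreasing_by exact Finset.mem_range.mp i.2

def ccoef (M : ℕ) (g : ℕ → ℝ) : ℝ :=
  2^(M+1) * (∑ i ∈ Finset.range M, |acoef M g i|) + 1

def afull (M : ℕ) (g : ℕ → ℝ) : ℕ → ℝ := fun i => if i = M then ccoef M g else acoef M g i

def newt (M : ℕ) (b : ℕ → ℝ) (y : ℕ) : ℝ := ∑ i ∈ Finset.range (M+1), b i * (y.choose i : ℝ)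

lemma acoef_eq (M : ℕ) (g : ℕ → ℝ) (r : ℕ) (hr : r < M) :
    acoef M g r = g r - ∑ i ∈ Finset.range r, acoef M g i * ((r.choose i : ℕ) : ℝ) := by
  rw [acoef, if_pos hr, ← Finset.sum_attach (Finset.range r)
    (fun i => acoef M g i * ((r.choose i : ℕ) : ℝ))]

lemma acoef_hi (M : ℕ) (g : ℕ → ℝ) (r : ℕ) (hr : ¬ r < M) : acoef M g r = 0 := by
  rw [acoef, if_neg hr]

lemma ccoef_pos (M : ℕ) (g : ℕ → ℝ) : 0 < ccoef M g := by
  have h : 0 ≤ ∑ i ∈ Finset.range M, |acoef M g i| :=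
    Finset.sum_nonneg (fun i _ => abs_nonneg _)
  have h2 : (0:ℝ) < 2^(M+1) := by positivity
  have h3 := mul_nonneg (le_of_lt h2) h
  rw [ccoef]
  linarith

lemma interp (M : ℕ) (g : ℕ → ℝ) (r : ℕ) (hr : r < M) :
    newt M (afull M g) r = g r := by
  rw [newt]
  rw [← Finset.sum_subset (Finset.range_subset_range.mpr (by omega : r+1 ≤ M+1))
    (fun x _ hnx => by
      have : r < x := by
        by_contra hc
        exact hnx (Finset.mem_range.mpr (by omega))
      rw [Nat.choose_eq_zero_of_lt this]
      simp)]
  rw [Finset.sum_range_succ]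
  have hterm : ∀ i ∈ Finset.range r, afull M g i * (r.choose i : ℝ)
      = acoef M g i * (r.choose i : ℝ) := by
    intro i hi
    have : i ≠ M := by have := Finset.mem_range.mp hi; omega
    rw [afull, if_neg this]
  rw [Finset.sum_congr rfl hterm]
  rw [afull, if_neg (by omega : r ≠ M), acoef_eq M g r hr]
  simp

/-- locality of iterated forward differences -/
lemma fd_local {f g : ℕ → ℝ} {t : ℕ} (h : ∀ x, t ≤ x → f x = g x) :
    ∀ j x, t ≤ x → (fwdDiff 1)^[j] f x = (fwdDiff 1)^[j] g x := by
  intro j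
  induction j with
  | zero => intro x hx; simpa using h x hx
  | succ j ih =>
      intro x hx
      rw [Function.iterate_succ_apply', Function.iterate_succ_apply']
      show (fwdDiff 1)^[j] f (x+1) - (fwdDiff 1)^[j] f x = (fwdDiff 1)^[j] g (x+1) - (fwdDiff 1)^[j] g x
      rw [ih x hx, ih (x+1) (by omega)]

lemma fd_shift (q : ℕ → ℝ) (k : ℕ) :
    ∀ j x, k ≤ x → (fwdDiff 1)^[j] (fun n => q (n - k)) x = (fwdDiff 1)^[j] q (x - k) := by
  intro j
  induction j with
  | zero => intro x hx; simp
  | succ j ih =>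
      intro x hx
      rw [Function.iterate_succ_apply', Function.iterate_succ_apply']
      show (fwdDiff 1)^[j] (fun n => q (n-k)) (x+1) - (fwdDiff 1)^[j] (fun n => q (n-k)) x
          = (fwdDiff 1)^[j] q ((x-k)+1) - (fwdDiff 1)^[j] q (x-k)
      rw [ih x hx, ih (x+1) (by omega), show x+1-k = (x-k)+1 by omega]

lemma fd_chooseR (j : ℕ) :
    fwdDiff 1 (fun y : ℕ => ((y.choose (j+1) : ℕ) : ℝ)) = fun y => ((y.choose j : ℕ) : ℝ) := by
  funext y
  show ((((y+1).choose (j+1) : ℕ)):ℝ) - ((y.choose (j+1) : ℕ):ℝ) = _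
  rw [Nat.choose_succ_succ' y j]
  push_cast
  ring

lemma fd_iter_zeroR : ∀ t, (fwdDiff 1)^[t] (fun _ : ℕ => (0:ℝ)) = fun _ => 0 := by
  intro t
  induction t with
  | zero => rfl
  | succ t ih =>
      rw [Function.iterate_succ_apply]
      have : fwdDiff 1 (fun _ : ℕ => (0:ℝ)) = fun _ => (0:ℝ) := by
        funext y; show (0:ℝ) - 0 = 0; ring
      rw [this, ih]

lemma fd_iter_chooseR (i : ℕ) :
    (fwdDiff 1)^[i] (fun y : ℕ => ((y.choose i : ℕ) : ℝ)) = fun _ => (1:ℝ) := by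
  induction i with
  | zero => funext y; simp
  | succ i ih =>
      rw [Function.iterate_succ_apply, fd_chooseR i, ih]

lemma fd_iter_choose_hi {i j : ℕ} (hij : i < j) :
    (fwdDiff 1)^[j] (fun y : ℕ => ((y.choose i : ℕ) : ℝ)) = fun _ => (0:ℝ) := by
  have hj : j = (j - i - 1) + 1 + i := by omega
  rw [hj, Function.iterate_add_apply, fd_iter_chooseR i, Function.iterate_succ_apply]
  have : fwdDiff 1 (fun _ : ℕ => (1:ℝ)) = fun _ => (0:ℝ) := by
    funext y; show (1:ℝ) - 1 = 0; ring
  rw [this, fd_iter_zeroR]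

lemma newt_as_sum (M : ℕ) (b : ℕ → ℝ) :
    newt M b = ∑ i ∈ Finset.range (M+1), b i • (fun y : ℕ => ((y.choose i : ℕ) : ℝ)) := by
  funext y
  rw [newt, Finset.sum_apply]
  simp

lemma fd_iter_newt_top (M : ℕ) (b : ℕ → ℝ) :
    (fwdDiff 1)^[M] (newt M b) = fun _ => b M := by
  rw [newt_as_sum, fwdDiff_iter_finset_sum]
  rw [Finset.sum_range_succ]
  have h1 : ∀ i ∈ Finset.range M, (fwdDiff 1)^[M] (b i • fun y : ℕ => ((y.choose i : ℕ) : ℝ))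
      = fun _ => (0:ℝ) := by
    intro i hi
    rw [fwdDiff_iter_const_smul, fd_iter_choose_hi (Finset.mem_range.mp hi)]
    funext y; simp
  rw [Finset.sum_congr rfl h1, fwdDiff_iter_const_smul, fd_iter_chooseR]
  funext y
  simp

lemma fd_iter_newt_zero (M : ℕ) (b : ℕ → ℝ) :
    (fwdDiff 1)^[M+1] (newt M b) = fun _ => (0:ℝ) := by
  rw [Function.iterate_succ_apply', fd_iter_newt_top]
  funext y; show b M - b M = 0; ring

lemma sum_alt (f : ℕ → ℝ) (m n : ℕ) :
    ∑ j ∈ Finset.range (m+1), (-1:ℝ)^j * (m.choose j : ℝ) * f (n + (m - j))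
      = (fwdDiff 1)^[m] f n := by
  rw [fwdDiff_iter_eq_sum_shift, ← Finset.sum_range_reflect]
  apply Finset.sum_congr rfl
  intro j hj
  have hjm : j ≤ m := by have := Finset.mem_range.mp hj; omega
  rw [show m+1-1-j = m - j by omega]
  rw [Nat.choose_symm hjm, show m - (m - j) = j by omega]
  rw [zsmul_eq_mul]
  push_cast
  rw [smul_eq_mul, mul_one]

lemma choose_le_two_pow' (M i : ℕ) : M.choose i ≤ 2^M := by
  by_cases h : i ≤ M
  · calc M.choose i ≤ ∑ j ∈ Finset.range (M+1), M.choose j :=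
        Finset.single_le_sum (fun j _ => Nat.zero_le _) (Finset.mem_range.mpr (by omega))
      _ = 2^M := Nat.sum_range_choose M
  · rw [Nat.choose_eq_zero_of_lt (by omega)]; exact Nat.zero_le _

lemma choose_le_aux {M i y : ℕ} (hiM : i ≤ M) (hMy : M ≤ y) :
    ((y.choose i : ℕ) : ℝ) ≤ 2^(M+1) * ((y.choose M : ℕ) : ℝ) := by
  have h1 : y.choose M * M.choose i = y.choose i * (y-i).choose (M-i) :=
    Nat.choose_mul hiM
  have h2 : 1 ≤ (y-i).choose (M-i) := Nat.choose_pos (by omega)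
  have h3 : y.choose i ≤ y.choose M * M.choose i := by
    calc y.choose i ≤ y.choose i * (y-i).choose (M-i) := Nat.le_mul_of_pos_right _ h2
      _ = y.choose M * M.choose i := h1.symm
  have h4 : y.choose i ≤ 2^(M+1) * y.choose M := by
    calc y.choose i ≤ y.choose M * M.choose i := h3
      _ ≤ y.choose M * 2^(M+1) := by
          apply Nat.mul_le_mul_left
          calc M.choose i ≤ 2^M := choose_le_two_pow' M i
            _ ≤ 2^(M+1) := Nat.pow_le_pow_right (by omega) (by omega)
      _ = 2^(M+1) * y.choose M := by ring
  calc ((y.choose i : ℕ) : ℝ) ≤ ((2^(M+1) * y.choose M : ℕ) : ℝ) := by exact_mod_cast h4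
    _ = 2^(M+1) * ((y.choose M : ℕ) : ℝ) := by push_cast; ring

lemma newt_split (M : ℕ) (g : ℕ → ℝ) (y : ℕ) :
    newt M (afull M g) y
      = (∑ i ∈ Finset.range M, acoef M g i * (y.choose i : ℝ)) + ccoef M g * (y.choose M : ℝ) := by
  rw [newt, Finset.sum_range_succ, afull, if_pos rfl]
  congr 1
  apply Finset.sum_congr rfl
  intro i hi
  rw [afull, if_neg (by have := Finset.mem_range.mp hi; omega)]

lemma newt_lb {M y : ℕ} (g : ℕ → ℝ) (hMy : M ≤ y) :
    ((y.choose M : ℕ) : ℝ) ≤ newt M (afull M g) y := by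
  rw [newt_split]
  have hsum : -((∑ i ∈ Finset.range M, |acoef M g i|) * (2^(M+1) * ((y.choose M : ℕ):ℝ)))
      ≤ ∑ i ∈ Finset.range M, acoef M g i * (y.choose i : ℝ) := by
    rw [Finset.sum_mul, ← Finset.sum_neg_distrib]
    apply Finset.sum_le_sum
    intro i hi
    have hiM : i < M := Finset.mem_range.mp hi
    have hc : (0:ℝ) ≤ (y.choose i : ℝ) := Nat.cast_nonneg _
    have habs : |acoef M g i * (y.choose i : ℝ)| ≤ |acoef M g i| * (2^(M+1) * ((y.choose M:ℕ):ℝ)) := by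
      rw [abs_mul, abs_of_nonneg hc]
      exact mul_le_mul_of_nonneg_left (choose_le_aux (by omega) hMy) (abs_nonneg _)
    have := neg_abs_le (acoef M g i * (y.choose i : ℝ))
    linarith
  have hexp : ccoef M g * ((y.choose M:ℕ):ℝ)
      = (∑ i ∈ Finset.range M, |acoef M g i|) * (2^(M+1) * ((y.choose M:ℕ):ℝ))
        + ((y.choose M:ℕ):ℝ) := by
    rw [ccoef]; ring
  linarith

lemma newt_ub {M y : ℕ} (g : ℕ → ℝ) (hMy : M ≤ y) :
    newt M (afull M g) y ≤ (2 * ccoef M g) * ((y.choose M : ℕ) : ℝ) := by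
  rw [newt_split]
  have hc : (0:ℝ) ≤ ((y.choose M:ℕ) : ℝ) := Nat.cast_nonneg _
  have hsum : ∑ i ∈ Finset.range M, acoef M g i * (y.choose i : ℝ)
      ≤ (∑ i ∈ Finset.range M, |acoef M g i|) * (2^(M+1) * ((y.choose M:ℕ):ℝ)) := by
    rw [Finset.sum_mul]
    apply Finset.sum_le_sum
    intro i hi
    have hiM : i < M := Finset.mem_range.mp hi
    have hcc : (0:ℝ) ≤ (y.choose i : ℝ) := Nat.cast_nonneg _
    calc acoef M g i * (y.choose i : ℝ) ≤ |acoef M g i| * (y.choose i : ℝ) :=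
          mul_le_mul_of_nonneg_right (le_abs_self _) hcc
      _ ≤ |acoef M g i| * (2^(M+1) * ((y.choose M:ℕ):ℝ)) :=
          mul_le_mul_of_nonneg_left (choose_le_aux (by omega) hMy) (abs_nonneg _)
  have hexp : ccoef M g * ((y.choose M:ℕ):ℝ)
      = (∑ i ∈ Finset.range M, |acoef M g i|) * (2^(M+1) * ((y.choose M:ℕ):ℝ))
        + ((y.choose M:ℕ):ℝ) := by
    rw [ccoef]; ring
  have h1 : (0:ℝ) < ccoef M g := ccoef_pos M g
  nlinarith

def betaFn (M k : ℕ) (pb : ℕ → ℝ) (n : ℕ) : ℝ :=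
  if n ≤ k + M - 1 then pb n else newt M (afull M (fun r => pb (k+r))) (n-k)

lemma beta_low {M k : ℕ} (pb : ℕ → ℝ) {n : ℕ} (h : n ≤ k + M - 1) :
    betaFn M k pb n = pb n := if_pos h

lemma beta_eq_newt {M k : ℕ} (pb : ℕ → ℝ) (hk : 1 ≤ k) {n : ℕ} (h : k ≤ n) :
    betaFn M k pb n = newt M (afull M (fun r => pb (k+r))) (n-k) := by
  by_cases h1 : n ≤ k + M - 1
  · rw [betaFn, if_pos h1, interp M _ (n-k) (by omega)]
    congr 1
    omega
  · rw [betaFn, if_neg h1]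

lemma beta_pos {M k : ℕ} {pb : ℕ → ℝ} (hk : 1 ≤ k)
    (hpb : ∀ n, n ≤ k + M - 1 → 0 < pb n) : ∀ n, 0 < betaFn M k pb n := by
  intro n
  by_cases h1 : n ≤ k + M - 1
  · rw [beta_low pb h1]; exact hpb n h1
  · rw [beta_eq_newt pb hk (by omega)]
    have hMy : M ≤ n - k := by omega
    have := newt_lb (fun r => pb (k+r)) hMy
    have hcp : 0 < (n-k).choose M := Nat.choose_pos (by omega)
    have : (0:ℝ) < (((n-k).choose M : ℕ) : ℝ) := by exact_mod_cast hcp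
    linarith [newt_lb (fun r => pb (k+r)) hMy]

lemma choose_ratio {M y : ℕ} (hy : M + 1 ≤ y) :
    (((y.choose M : ℕ)) : ℝ) ≤ (M+1) * (((y-1).choose M : ℕ) : ℝ) := by
  have hN : y.choose M ≤ (M+1) * (y-1).choose M := by
    cases M with
    | zero => simp
    | succ M' =>
        have hy1 : y - 1 + 1 = y := by omega
        have hp : y.choose (M'+1) = (y-1).choose M' + (y-1).choose (M'+1) := by
          rw [← hy1, Nat.choose_succ_succ' (y-1) M']
          simp
        have hr : (y-1).choose M' * ((y-1) - M') = (y-1).choose (M'+1) * (M'+1) :=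
          (Nat.choose_succ_right_eq (y-1) M').symm
        have h1 : (y-1).choose M' ≤ (y-1).choose (M'+1) * (M'+1) := by
          calc (y-1).choose M' ≤ (y-1).choose M' * ((y-1) - M') :=
                Nat.le_mul_of_pos_right _ (by omega)
            _ = (y-1).choose (M'+1) * (M'+1) := hr
        calc y.choose (M'+1) = (y-1).choose M' + (y-1).choose (M'+1) := hp
          _ ≤ (y-1).choose (M'+1) * (M'+1) + (y-1).choose (M'+1) := by omega
          _ = (M'+1+1) * (y-1).choose (M'+1) := by ring
  calc ((y.choose M : ℕ) : ℝ) ≤ (((M+1) * (y-1).choose M : ℕ) : ℝ) := by exact_mod_cast hN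
    _ = (M+1) * (((y-1).choose M : ℕ) : ℝ) := by push_cast; ring

lemma beta_ratio {M k : ℕ} {pb : ℕ → ℝ} (hk : 1 ≤ k) :
    ∀ n, k + M + 1 ≤ n →
      betaFn M k pb n ≤ (2 * ccoef M (fun r => pb (k+r)) * (M+1)) * betaFn M k pb (n-1) := by
  intro n hn
  set g := fun r => pb (k+r) with hg
  have hc : (0:ℝ) < ccoef M g := ccoef_pos M g
  have hy : M + 1 ≤ n - k := by omega
  have h1 : betaFn M k pb n = newt M (afull M g) (n-k) := beta_eq_newt pb hk (by omega)
  have h2 : betaFn M k pb (n-1) = newt M (afull M g) ((n-1)-k) := beta_eq_newt pb hk (by omega)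
  have h3 : (n-1)-k = (n-k)-1 := by omega
  have hub := newt_ub g (by omega : M ≤ n - k)
  have hlb := newt_lb g (by omega : M ≤ (n-k)-1)
  have hratio := choose_ratio hy
  rw [h1, h2, h3]
  calc newt M (afull M g) (n-k) ≤ (2 * ccoef M g) * (((n-k).choose M : ℕ) : ℝ) := hub
    _ ≤ (2 * ccoef M g) * ((M+1) * ((((n-k)-1).choose M : ℕ) : ℝ)) := by
        apply mul_le_mul_of_nonneg_left hratio (by linarith)
    _ = (2 * ccoef M g * (M+1)) * ((((n-k)-1).choose M : ℕ) : ℝ) := by ring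
    _ ≤ (2 * ccoef M g * (M+1)) * newt M (afull M g) ((n-k)-1) := by
        apply mul_le_mul_of_nonneg_left hlb
        positivity

lemma key_zero {M k : ℕ} (pb : ℕ → ℝ) (hk : 1 ≤ k) {n : ℕ} (hn : k ≤ n) :
    ∑ j ∈ Finset.range (M+2), (-1:ℝ)^j * ((M+1).choose j : ℝ) * betaFn M k pb (n + (M+1-j))
      = 0 := by
  have hsa := sum_alt (betaFn M k pb) (M+1) n
  have hloc := fd_local (f := betaFn M k pb)
    (g := fun x => newt M (afull M (fun r => pb (k+r))) (x-k))
    (t := k) (fun x hx => beta_eq_newt pb hk hx) (M+1) n hn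
  have hsh := fd_shift (newt M (afull M (fun r => pb (k+r)))) k (M+1) n hn
  have hz := congrFun (fd_iter_newt_zero M (afull M (fun r => pb (k+r)))) (n-k)
  calc ∑ j ∈ Finset.range (M+2), (-1:ℝ)^j * ((M+1).choose j : ℝ) * betaFn M k pb (n + (M+1-j))
      = (fwdDiff 1)^[M+1] (betaFn M k pb) n := hsa
    _ = (fwdDiff 1)^[M+1] (fun x => newt M (afull M (fun r => pb (k+r))) (x-k)) n := hloc
    _ = (fwdDiff 1)^[M+1] (newt M (afull M (fun r => pb (k+r)))) (n-k) := hsh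
    _ = 0 := hz

lemma key_top {M k : ℕ} (pb : ℕ → ℝ) (hk : 1 ≤ k) {n : ℕ} (hn : k ≤ n) :
    ∑ j ∈ Finset.range (M+1), (-1:ℝ)^j * (M.choose j : ℝ) * betaFn M k pb (n + (M-j))
      = ccoef M (fun r => pb (k+r)) := by
  have hsa := sum_alt (betaFn M k pb) M n
  have hloc := fd_local (f := betaFn M k pb)
    (g := fun x => newt M (afull M (fun r => pb (k+r))) (x-k))
    (t := k) (fun x hx => beta_eq_newt pb hk hx) M n hn
  have hsh := fd_shift (newt M (afull M (fun r => pb (k+r)))) k M n hn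
  have hz := congrFun (fd_iter_newt_top M (afull M (fun r => pb (k+r)))) (n-k)
  calc ∑ j ∈ Finset.range (M+1), (-1:ℝ)^j * (M.choose j : ℝ) * betaFn M k pb (n + (M-j))
      = (fwdDiff 1)^[M] (betaFn M k pb) n := hsa
    _ = (fwdDiff 1)^[M] (fun x => newt M (afull M (fun r => pb (k+r))) (x-k)) n := hloc
    _ = (fwdDiff 1)^[M] (newt M (afull M (fun r => pb (k+r)))) (n-k) := hsh
    _ = afull M (fun r => pb (k+r)) M := hz
    _ = ccoef M (fun r => pb (k+r)) := by rw [afull, if_pos rfl]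


def shiftF (w : ℕ → ℝ) (x : ℕ → ℂ) : ℕ → ℂ
  | 0 => 0
  | (n+1) => (w (n+1) : ℂ) * x n

lemma twoPos : (0:ℝ) < (2:ℝ≥0∞).toReal := by norm_num

lemma rp (x : ℝ) : x ^ ((2:ℝ≥0∞).toReal) = x ^ (2:ℕ) := by
  rw [ENNReal.toReal_ofNat, ← Real.rpow_natCast x 2]
  norm_num

lemma summable_sq (x : ellTwo) : Summable (fun n => ‖(x:ℕ→ℂ) n‖ ^ (2:ℕ)) := by
  have := (lp.memℓp x).summable twoPos
  simpa [rp] using this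

def padded (g : ℕ → ℝ) : ℕ → ℝ
  | 0 => 0
  | (n+1) => g n

lemma summable_padded {g : ℕ → ℝ} (hg : Summable g) : Summable (padded g) :=
  (_root_.summable_nat_add_iff 1).mp (by exact hg)

lemma tsum_padded {g : ℕ → ℝ} (hg : Summable g) : ∑' n, padded g n = ∑' n, g n := by
  rw [Summable.tsum_eq_zero_add (summable_padded hg)]
  simp [padded]

lemma shiftF_le {w : ℕ → ℝ} {C : ℝ} (hC : ∀ n, |w n| ≤ C) (x : ellTwo) (n : ℕ) :
    ‖shiftF w x n‖^(2:ℕ) ≤ padded (fun j => C^2 * ‖(x:ℕ→ℂ) j‖ ^ (2:ℕ)) n := by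
  cases n with
  | zero => simp [shiftF, padded]
  | succ j =>
      simp only [shiftF, padded]
      rw [norm_mul, Complex.norm_real, Real.norm_eq_abs, mul_pow]
      exact mul_le_mul_of_nonneg_right (pow_le_pow_left₀ (abs_nonneg _) (hC _) 2)
        (pow_nonneg (norm_nonneg _) _)

lemma memℓp_shiftF {w : ℕ → ℝ} {C : ℝ} (hC : ∀ n, |w n| ≤ C) (x : ellTwo) :
    Memℓp (shiftF w x) 2 := by
  apply memℓp_gen
  have h1 : Summable (padded (fun j => C^2 * ‖(x:ℕ→ℂ) j‖ ^ (2:ℕ))) :=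
    summable_padded ((summable_sq x).mul_left _)
  simp only [rp]
  exact Summable.of_nonneg_of_le (fun n => pow_nonneg (norm_nonneg _) _) (shiftF_le hC x) h1

def bshiftF (w : ℕ → ℝ) (x : ℕ → ℂ) : ℕ → ℂ := fun n => (w (n+1) : ℂ) * x (n+1)

lemma memℓp_bshiftF {w : ℕ → ℝ} {C : ℝ} (hC : ∀ n, |w n| ≤ C) (x : ellTwo) :
    Memℓp (bshiftF w x) 2 := by
  apply memℓp_gen
  have h1 : Summable (fun n => C^2 * ‖(x:ℕ→ℂ) (n+1)‖ ^ (2:ℕ)) := by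
    apply Summable.mul_left
    exact (_root_.summable_nat_add_iff (f := fun n => ‖(x:ℕ→ℂ) n‖ ^ (2:ℕ)) 1).mpr (summable_sq x)
  simp only [rp]
  refine Summable.of_nonneg_of_le (fun n => pow_nonneg (norm_nonneg _) _) ?_ h1
  intro n
  simp only [bshiftF]
  rw [norm_mul, Complex.norm_real, Real.norm_eq_abs, mul_pow]
  exact mul_le_mul_of_nonneg_right (pow_le_pow_left₀ (abs_nonneg _) (hC _) 2)
    (pow_nonneg (norm_nonneg _) _)

lemma norm_lp_le (y x : ellTwo) {C : ℝ} (hC : 0 ≤ C)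
    (h : ∑' n, ‖(y:ℕ→ℂ) n‖^(2:ℕ) ≤ C^2 * ∑' n, ‖(x:ℕ→ℂ) n‖^(2:ℕ)) : ‖y‖ ≤ C * ‖x‖ := by
  apply lp.norm_le_of_tsum_le twoPos (mul_nonneg hC (norm_nonneg _))
  simp only [rp]
  have hx : (‖x‖ : ℝ) ^ (2:ℕ) = ∑' n, ‖(x:ℕ→ℂ) n‖^(2:ℕ) := by
    have := lp.norm_rpow_eq_tsum twoPos x
    simpa [rp] using this
  calc ∑' n, ‖(y:ℕ→ℂ) n‖^(2:ℕ) ≤ C^2 * ∑' n, ‖(x:ℕ→ℂ) n‖^(2:ℕ) := h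
    _ = (C * ‖x‖)^(2:ℕ) := by rw [mul_pow, hx]

lemma shiftF_tsum_le {w : ℕ → ℝ} {C : ℝ} (hC : ∀ n, |w n| ≤ C) (x : ellTwo) :
    ∑' n, ‖shiftF w x n‖^(2:ℕ) ≤ C^2 * ∑' n, ‖(x:ℕ→ℂ) n‖^(2:ℕ) := by
  have hsum : Summable (fun j => C^2 * ‖(x:ℕ→ℂ) j‖ ^ (2:ℕ)) := (summable_sq x).mul_left _
  have h1 : Summable (padded (fun j => C^2 * ‖(x:ℕ→ℂ) j‖ ^ (2:ℕ))) := summable_padded hsum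
  have hs : Summable (fun n => ‖shiftF w x n‖^(2:ℕ)) := by
    have := (memℓp_shiftF hC x).summable twoPos
    simpa [rp] using this
  calc ∑' n, ‖shiftF w x n‖^(2:ℕ)
      ≤ ∑' n, padded (fun j => C^2 * ‖(x:ℕ→ℂ) j‖ ^ (2:ℕ)) n :=
        Summable.tsum_le_tsum (shiftF_le hC x) hs h1
    _ = ∑' n, C^2 * ‖(x:ℕ→ℂ) n‖ ^ (2:ℕ) := tsum_padded hsum
    _ = C^2 * ∑' n, ‖(x:ℕ→ℂ) n‖^(2:ℕ) := tsum_mul_left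

lemma bshiftF_tsum_le {w : ℕ → ℝ} {C : ℝ} (hC : ∀ n, |w n| ≤ C) (x : ellTwo) :
    ∑' n, ‖bshiftF w x n‖^(2:ℕ) ≤ C^2 * ∑' n, ‖(x:ℕ→ℂ) n‖^(2:ℕ) := by
  have hsx := summable_sq x
  have hsx' : Summable (fun n => ‖(x:ℕ→ℂ) (n+1)‖^(2:ℕ)) :=
    (_root_.summable_nat_add_iff (f := fun n => ‖(x:ℕ→ℂ) n‖ ^ (2:ℕ)) 1).mpr hsx
  have hs : Summable (fun n => ‖bshiftF w x n‖^(2:ℕ)) := by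
    have := (memℓp_bshiftF hC x).summable twoPos
    simpa [rp] using this
  have hle : ∀ n, ‖bshiftF w x n‖^(2:ℕ) ≤ C^2 * ‖(x:ℕ→ℂ) (n+1)‖^(2:ℕ) := by
    intro n
    simp only [bshiftF]
    rw [norm_mul, Complex.norm_real, Real.norm_eq_abs, mul_pow]
    exact mul_le_mul_of_nonneg_right (pow_le_pow_left₀ (abs_nonneg _) (hC _) 2)
      (pow_nonneg (norm_nonneg _) _)
  calc ∑' n, ‖bshiftF w x n‖^(2:ℕ) ≤ ∑' n, C^2 * ‖(x:ℕ→ℂ) (n+1)‖^(2:ℕ) :=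
        Summable.tsum_le_tsum hle hs (hsx'.mul_left _)
    _ = C^2 * ∑' n, ‖(x:ℕ→ℂ) (n+1)‖^(2:ℕ) := tsum_mul_left
    _ ≤ C^2 * ∑' n, ‖(x:ℕ→ℂ) n‖^(2:ℕ) := by
        apply mul_le_mul_of_nonneg_left _ (sq_nonneg C)
        rw [Summable.tsum_eq_zero_add hsx]
        have : (0:ℝ) ≤ ‖(x:ℕ→ℂ) 0‖^(2:ℕ) := pow_nonneg (norm_nonneg _) _
        linarith

def Sop (w : ℕ → ℝ) {C : ℝ} (hC : ∀ n, |w n| ≤ C) : ellTwo →L[ℂ] ellTwo :=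
  LinearMap.mkContinuous
    { toFun := fun x => (⟨shiftF w x, memℓp_shiftF hC x⟩ : ellTwo)
      map_add' := by
        intro x y
        apply lp.ext; funext n
        cases n with
        | zero => simp [shiftF]; change _ = shiftF w x 0 + shiftF w y 0; simp [shiftF]
        | succ j => simp [shiftF, mul_add]; change _ = shiftF w x (j+1) + shiftF w y (j+1); simp [shiftF]
      map_smul' := by
        intro c x
        apply lp.ext; funext n
        cases n with
        | zero => simp [shiftF]
        | succ j => simp [shiftF]; ring }
    C
    (by
      intro x
      exact norm_lp_le _ x (le_trans (abs_nonneg _) (hC 0)) (shiftF_tsum_le hC x))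

def Top (w : ℕ → ℝ) {C : ℝ} (hC : ∀ n, |w n| ≤ C) : ellTwo →L[ℂ] ellTwo :=
  LinearMap.mkContinuous
    { toFun := fun x => (⟨bshiftF w x, memℓp_bshiftF hC x⟩ : ellTwo)
      map_add' := by
        intro x y
        apply lp.ext; funext n
        simp [bshiftF, mul_add]; change _ = bshiftF w x n + bshiftF w y n; simp [bshiftF]
      map_smul' := by
        intro c x
        apply lp.ext; funext n
        simp [bshiftF]; ring }
    C
    (by
      intro x
      exact norm_lp_le _ x (le_trans (abs_nonneg _) (hC 0)) (bshiftF_tsum_le hC x))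

lemma Sop_apply (w : ℕ → ℝ) {C : ℝ} (hC : ∀ n, |w n| ≤ C) (x : ellTwo) (n : ℕ) :
    ((Sop w hC x : ellTwo) : ℕ → ℂ) n = shiftF w x n := rfl

lemma Top_apply (w : ℕ → ℝ) {C : ℝ} (hC : ∀ n, |w n| ≤ C) (x : ellTwo) (n : ℕ) :
    ((Top w hC x : ellTwo) : ℕ → ℂ) n = (w (n+1) : ℂ) * (x : ℕ → ℂ) (n+1) := rfl

lemma stdVec_apply (n j : ℕ) : ((stdVec n) : ℕ → ℂ) j = if j = n then 1 else 0 := by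
  rw [stdVec, lp.single_apply]
  by_cases h : j = n
  · subst h; simp
  · simp [h]

lemma stdVec_ne_zero (n : ℕ) : stdVec n ≠ 0 := by
  intro h
  have := congr_arg (fun f : ellTwo => (f : ℕ → ℂ) n) h
  simp [stdVec_apply] at this

lemma smul_stdVec_apply (c : ℂ) (n j : ℕ) :
    ((c • stdVec n : ellTwo) : ℕ → ℂ) j = c * (if j = n then 1 else 0) := by
  rw [lp.coeFn_smul, Pi.smul_apply, stdVec_apply, smul_eq_mul]

lemma Sop_stdVec (w : ℕ → ℝ) {C : ℝ} (hC : ∀ n, |w n| ≤ C) (n : ℕ) :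
    Sop w hC (stdVec n) = (w (n+1) : ℂ) • stdVec (n+1) := by
  apply lp.ext; funext j
  rw [Sop_apply, smul_stdVec_apply]
  cases j with
  | zero => simp [shiftF]
  | succ i =>
      simp only [shiftF, stdVec_apply, Nat.succ.injEq]
      by_cases h : i = n
      · subst h; simp
      · simp [h]

lemma Top_stdVec_succ (w : ℕ → ℝ) {C : ℝ} (hC : ∀ n, |w n| ≤ C) (n : ℕ) :
    Top w hC (stdVec (n+1)) = (w (n+1) : ℂ) • stdVec n := by
  apply lp.ext; funext j
  rw [Top_apply, smul_stdVec_apply, stdVec_apply]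
  by_cases h : j = n
  · subst h; simp
  · have h2 : ¬ (j + 1 = n + 1) := fun hh => h (Nat.succ_injective hh)
    simp only [h, h2, if_false, mul_zero]

lemma Top_stdVec_zero (w : ℕ → ℝ) {C : ℝ} (hC : ∀ n, |w n| ≤ C) :
    Top w hC (stdVec 0) = 0 := by
  apply lp.ext; funext j
  rw [Top_apply, stdVec_apply]
  simp

open scoped ComplexConjugate in
lemma inner_eq (f g : ellTwo) : (inner ℂ f g : ℂ) = ∑' n, conj ((f:ℕ→ℂ) n) * (g:ℕ→ℂ) n := by
  rw [← (lp.hasSum_inner (𝕜 := ℂ) f g).tsum_eq]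
  simp [RCLike.inner_apply, mul_comm]

open scoped ComplexConjugate in
lemma adjoint_Sop (w : ℕ → ℝ) {C : ℝ} (hC : ∀ n, |w n| ≤ C) :
    ContinuousLinearMap.adjoint (Sop w hC) = Top w hC := by
  symm
  rw [ContinuousLinearMap.eq_adjoint_iff]
  intro x y
  rw [inner_eq, inner_eq]
  have hsum : Summable (fun n => conj ((x:ℕ→ℂ) n) * ((Sop w hC y : ellTwo) : ℕ → ℂ) n) := by
    have := lp.summable_inner (𝕜 := ℂ) x (Sop w hC y)
    simpa [RCLike.inner_apply, mul_comm] using this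
  rw [Summable.tsum_eq_zero_add hsum]
  have h0 : conj ((x:ℕ→ℂ) 0) * ((Sop w hC y : ellTwo) : ℕ → ℂ) 0 = 0 := by
    rw [Sop_apply]; simp [shiftF]
  rw [h0, zero_add]
  apply tsum_congr
  intro n
  rw [Top_apply, Sop_apply]
  simp only [shiftF, map_mul, Complex.conj_ofReal]
  ring

def wprod (w : ℕ → ℝ) (n s : ℕ) : ℂ := ∏ i ∈ Finset.range s, (w (n+1+i) : ℂ)

lemma wprod_succ_bot (w : ℕ → ℝ) (n s : ℕ) :
    wprod w n (s+1) = (w (n+1):ℂ) * wprod w (n+1) s := by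
  rw [wprod, Finset.prod_range_succ', add_zero, mul_comm, wprod]
  congr 1
  refine Finset.prod_congr rfl (fun i _ => ?_)
  have e : n+1+(i+1) = n+1+1+i := by omega
  rw [e]

lemma wprod_succ_top (w : ℕ → ℝ) (n s : ℕ) :
    wprod w n (s+1) = wprod w n s * (w (n+1+s):ℂ) := by
  rw [wprod, Finset.prod_range_succ, wprod]

lemma Sop_pow (w : ℕ → ℝ) {C : ℝ} (hC : ∀ n, |w n| ≤ C) (s n : ℕ) :
    ((Sop w hC)^s) (stdVec n) = wprod w n s • stdVec (n+s) := by
  induction s generalizing n with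
  | zero => simp [wprod]
  | succ s ih =>
      rw [pow_succ, ContinuousLinearMap.mul_apply, Sop_stdVec, map_smul, ih, smul_smul,
        ← wprod_succ_bot]
      rw [show n+1+s = n+(s+1) by omega]

lemma Top_pow (w : ℕ → ℝ) {C : ℝ} (hC : ∀ n, |w n| ≤ C) (s n : ℕ) :
    ((Top w hC)^s) (stdVec (n+s)) = wprod w n s • stdVec n := by
  induction s generalizing n with
  | zero => simp [wprod]
  | succ s ih =>
      rw [show n+(s+1) = (n+s)+1 by omega, pow_succ, ContinuousLinearMap.mul_apply,
        Top_stdVec_succ, map_smul, ih, smul_smul, wprod_succ_top, mul_comm,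
        show n+s+1 = n+1+s by omega]

lemma TS_pow (w : ℕ → ℝ) {C : ℝ} (hC : ∀ n, |w n| ≤ C) (s r : ℕ) :
    ((Top w hC)^s) (((Sop w hC)^s) (stdVec r)) = ((wprod w r s)^2) • stdVec r := by
  rw [Sop_pow, map_smul, Top_pow, smul_smul, ← pow_two]

def sigma (w : ℕ → ℝ) (m r : ℕ) : ℂ :=
  ∑ j ∈ Finset.range (m+1), (-1:ℂ)^j * (m.choose j : ℂ) * (wprod w r (m-j))^2

lemma Bop_Sop_stdVec (w : ℕ → ℝ) {C : ℝ} (hC : ∀ n, |w n| ≤ C) (m r : ℕ) :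
    Bop m (Sop w hC) (stdVec r) = sigma w m r • stdVec r := by
  rw [Bop, adjoint_Sop]
  rw [ContinuousLinearMap.sum_apply]
  rw [sigma, Finset.sum_smul]
  apply Finset.sum_congr rfl
  intro j _
  rw [ContinuousLinearMap.smul_apply, ContinuousLinearMap.mul_apply, TS_pow, smul_smul]

lemma quasi_apply (w : ℕ → ℝ) {C : ℝ} (hC : ∀ n, |w n| ≤ C) (m k n : ℕ) :
    ((Top w hC)^k * Bop m (Sop w hC) * (Sop w hC)^k) (stdVec n)
      = ((wprod w n k)^2 * sigma w m (n+k)) • stdVec n := by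
  rw [ContinuousLinearMap.mul_apply, ContinuousLinearMap.mul_apply, Sop_pow,
    map_smul, map_smul, Bop_Sop_stdVec, map_smul, Top_pow, smul_smul, smul_smul]
  ring_nf

lemma eq_zero_of_stdVec (A : ellTwo →L[ℂ] ellTwo) (h : ∀ n, A (stdVec n) = 0) : A = 0 := by
  ext f
  have hs := lp.hasSum_single (E := fun _ : ℕ => ℂ) (p := 2) (by norm_num) f
  have h2 : HasSum (fun n => A (lp.single 2 n ((f : ℕ → ℂ) n))) (A f) := A.hasSum hs
  have h3 : ∀ n, A (lp.single 2 n ((f : ℕ → ℂ) n)) = 0 := by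
    intro n
    have : lp.single 2 n ((f : ℕ → ℂ) n) = ((f : ℕ → ℂ) n) • stdVec n := by
      rw [stdVec, ← lp.single_smul]
      congr 1
      simp
    rw [this, map_smul, h n, smul_zero]
  simp only [h3] at h2
  have := h2.unique hasSum_zero
  simp [this]

lemma prod_w_sq {w β : ℕ → ℝ} (hβ : ∀ n, 0 < β n)
    (hwsq : ∀ n, 1 ≤ n → w n ^ 2 = β n / β (n-1)) :
    ∀ s r, (∏ i ∈ Finset.range s, (w (r+1+i))^2) = β (r+s) / β r := by
  intro s
  induction s with
  | zero => intro r; simp [div_self (ne_of_gt (hβ r))]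
  | succ s ih =>
      intro r
      rw [Finset.prod_range_succ, ih r, hwsq (r+1+s) (by omega),
        show r+1+s-1 = r+s by omega, show r+(s+1) = r+1+s by omega]
      field_simp
      rw [mul_div_mul_left _ _ (ne_of_gt (hβ (r+s)))]

lemma wprod_sq {w β : ℕ → ℝ} (hβ : ∀ n, 0 < β n)
    (hwsq : ∀ n, 1 ≤ n → w n ^ 2 = β n / β (n-1)) (r s : ℕ) :
    (wprod w r s)^2 = ((β (r+s) / β r : ℝ) : ℂ) := by
  rw [← prod_w_sq hβ hwsq s r, wprod]
  push_cast
  rw [← Finset.prod_pow]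

lemma sigma_eq {w β : ℕ → ℝ} (hβ : ∀ n, 0 < β n)
    (hwsq : ∀ n, 1 ≤ n → w n ^ 2 = β n / β (n-1)) (m r : ℕ) :
    sigma w m r
      = (((∑ j ∈ Finset.range (m+1), (-1:ℝ)^j * (m.choose j : ℝ) * β (r+(m-j))) / β r : ℝ) : ℂ) := by
  rw [sigma]
  have hterm : ∀ j ∈ Finset.range (m+1),
      (-1:ℂ)^j * ((m.choose j : ℕ) : ℂ) * (wprod w r (m-j))^2
        = (((-1:ℝ)^j * (m.choose j : ℝ) * (β (r+(m-j)) / β r) : ℝ) : ℂ) := by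
    intro j _
    rw [wprod_sq hβ hwsq]
    push_cast
    ring
  rw [Finset.sum_congr rfl hterm, ← Complex.ofReal_sum]
  congr 1
  rw [Finset.sum_div]
  exact Finset.sum_congr rfl (fun j _ => by ring)


end QMIAux

/-- Proposition, part (i).
If `l ≤ k + m − 2` and positive weights `λ_1, …, λ_{k+m−2}` are given (extending the initial
data `λ_1, …, λ_l` by an arbitrary choice of positive reals), then there is a bounded positive
sequence extending `λ_1, …, λ_{k+m−2}` whose unilateral weighted shift is a strict
`k`-quasi-`m`-isometry. -/
theorem stmt1 (m l k : ℕ) (hm : 1 ≤ m) (hl : 1 ≤ l) (hk : 1 ≤ k)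
    (hlk : l ≤ k + m - 2) (lam : ℕ → ℝ)
    (hpos : ∀ n : ℕ, 1 ≤ n → n ≤ k + m - 2 → 0 < lam n) :
    ∃ lam' : ℕ → ℝ, IsWeightCompletion (k + m - 2) lam lam' ∧
      ∃ S : ellTwo →L[ℂ] ellTwo, IsWeightedShift lam' S ∧
        IsQuasiIsometric k m S ∧ ¬ IsQuasiIsometric k (m - 1) S := by
  obtain ⟨M, rfl⟩ : ∃ M, m = M + 1 := ⟨m - 1, by omega⟩
  set pb : ℕ → ℝ := fun n => ∏ i ∈ Finset.Icc 1 n, (lam i)^2 with hpbdef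
  have hpb : ∀ n, n ≤ k + M - 1 → 0 < pb n := by
    intro n hn
    apply Finset.prod_pos
    intro i hi
    have h1 := Finset.mem_Icc.mp hi
    exact pow_pos (hpos i h1.1 (by omega)) 2
  set β := QMIAux.betaFn M k pb with hβdef
  have hβpos : ∀ n, 0 < β n := QMIAux.beta_pos hk hpb
  set w : ℕ → ℝ := fun n => if n = 0 then 1 else Real.sqrt (β n / β (n-1)) with hwdef
  have hwpos : ∀ n, 0 < w n := by
    intro n
    by_cases h : n = 0
    · simp [hwdef, h]
    · simp only [hwdef, if_neg h]
      exact Real.sqrt_pos.mpr (div_pos (hβpos n) (hβpos (n-1)))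
  have hwsq : ∀ n, 1 ≤ n → w n ^ 2 = β n / β (n-1) := by
    intro n hn
    simp only [hwdef, if_neg (by omega : ¬ n = 0)]
    exact Real.sq_sqrt (le_of_lt (div_pos (hβpos n) (hβpos (n-1))))
  have hccpos : 0 < QMIAux.ccoef M (fun r => pb (k+r)) := QMIAux.ccoef_pos _ _
  set R : ℝ := 2 * QMIAux.ccoef M (fun r => pb (k+r)) * (M+1) with hRdef
  set D : ℝ := Real.sqrt R + (∑ j ∈ Finset.range (k+M+2), w j) with hDdef
  have hsumnn : 0 ≤ ∑ j ∈ Finset.range (k+M+2), w j :=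
    Finset.sum_nonneg (fun j _ => le_of_lt (hwpos j))
  have hwle : ∀ n, |w n| ≤ D := by
    intro n
    rw [abs_of_pos (hwpos n), hDdef]
    by_cases h : n < k + M + 2
    · have h1 : w n ≤ ∑ j ∈ Finset.range (k+M+2), w j :=
        Finset.single_le_sum (fun j _ => le_of_lt (hwpos j)) (Finset.mem_range.mpr h)
      have h2 : 0 ≤ Real.sqrt R := Real.sqrt_nonneg _
      linarith
    · have hn1 : k + M + 1 ≤ n := by omega
      have hratio := QMIAux.beta_ratio (pb := pb) hk n hn1
      have h1 : w n ≤ Real.sqrt R := by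
        simp only [hwdef, if_neg (by omega : ¬ n = 0)]
        apply Real.sqrt_le_sqrt
        rw [div_le_iff₀ (hβpos (n-1))]
        exact hratio
      linarith
  refine ⟨w, ⟨hwpos, ⟨D, fun n => le_trans (le_abs_self _) (hwle n)⟩, ?_⟩,
    QMIAux.Sop w hwle, ?_, ?_, ?_⟩
  · -- agreement with lam on 1..k+(M+1)-2
    intro n hn1 hn2
    have hn2' : n ≤ k + M - 1 := by omega
    have hb1 : β n = pb n := QMIAux.beta_low pb hn2'
    have hb2 : β (n-1) = pb (n-1) := QMIAux.beta_low pb (by omega)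
    have hstep : pb n = pb (n-1) * (lam n)^2 := by
      have h2 : n - 1 + 1 = n := by omega
      calc pb n = ∏ i ∈ Finset.Icc 1 (n-1+1), (lam i)^2 := by rw [h2]
        _ = (∏ i ∈ Finset.Icc 1 (n-1), (lam i)^2) * (lam (n-1+1))^2 :=
            Finset.prod_Icc_succ_top (show 1 ≤ n-1+1 by omega) (fun i => (lam i)^2)
        _ = pb (n-1) * (lam n)^2 := by rw [h2]
    have hquot : β n / β (n-1) = (lam n)^2 := by
      rw [hb1, hb2, hstep, mul_comm, mul_div_assoc,
        div_self (ne_of_gt (hpb (n-1) (by omega))), mul_one]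
    simp only [hwdef, if_neg (by omega : ¬ n = 0)]
    rw [hquot]
    exact Real.sqrt_sq (le_of_lt (hpos n hn1 hn2))
  · -- weighted shift
    intro n
    exact QMIAux.Sop_stdVec w hwle n
  · -- quasi-isometric
    rw [IsQuasiIsometric, QMIAux.adjoint_Sop]
    apply QMIAux.eq_zero_of_stdVec
    intro n
    rw [QMIAux.quasi_apply]
    have hσ : QMIAux.sigma w (M+1) (n+k) = 0 := by
      rw [QMIAux.sigma_eq hβpos hwsq,
        QMIAux.key_zero pb hk (by omega : k ≤ n + k)]
      simp
    rw [hσ, mul_zero, zero_smul]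
  · -- strictness
    intro hQ
    rw [show M + 1 - 1 = M from rfl, IsQuasiIsometric, QMIAux.adjoint_Sop] at hQ
    have h0 := congrArg (fun A : ellTwo →L[ℂ] ellTwo => A (stdVec 0)) hQ
    simp only [ContinuousLinearMap.zero_apply] at h0
    rw [QMIAux.quasi_apply] at h0
    have hσ : QMIAux.sigma w M (0+k) ≠ 0 := by
      rw [QMIAux.sigma_eq hβpos hwsq,
        QMIAux.key_top pb hk (by omega : k ≤ 0 + k)]
      apply Complex.ofReal_ne_zero.mpr
      exact ne_of_gt (div_pos hccpos (hβpos (0+k)))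
    have hwp : QMIAux.wprod w 0 k ≠ 0 := by
      rw [QMIAux.wprod]
      apply Finset.prod_ne_zero_iff.mpr
      intro i _
      exact Complex.ofReal_ne_zero.mpr (ne_of_gt (hwpos _))
    have hscal : (QMIAux.wprod w 0 k)^2 * QMIAux.sigma w M (0+k) ≠ 0 :=
      mul_ne_zero (pow_ne_zero _ hwp) hσ
    rcases smul_eq_zero.mp h0 with h | h
    · exact hscal h
    · exact QMIAux.stdVec_ne_zero 0 h
end
end

section
/- Let λ = (λ_n)_{n≥1} be a bounded sequence of positive reals, let k ≥ 1 and m ≥ 1 be integers, and let S_λ be the associated unilateral weighted shift on ℓ²(ℕ). Then S_λ is k-quasi-m-isometric if and only if Σ_{j=0}^{m} (−1)^j binom(m,j) ‖S_λ^{s+j} e_k‖² = 0 for every integer s ≥ 0; equivalently, if and only if Σ_{j=0}^{m} (−1)^j binom(m,j) (βλ)_{k+s+j} = 0 for every integer s ≥ 0. -/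
noncomputable section

variable {E : Type*} [NormedAddCommGroup E] [InnerProductSpace ℂ E] [CompleteSpace E]

/-! ### Auxiliary material -/

/-- The product `λ_{n+1} ⋯ λ_{n+p}`. -/
def wprod (lam : ℕ → ℝ) (n p : ℕ) : ℝ := ∏ i ∈ Finset.Icc (n + 1) (n + p), lam i

lemma betaSeq_pos {lam : ℕ → ℝ} (hpos : ∀ n, 0 < lam n) (s : ℕ) : 0 < betaSeq lam s :=
  Finset.prod_pos fun i _ => pow_pos (hpos i) 2

lemma betaSeq_add (lam : ℕ → ℝ) (n p : ℕ) :
    betaSeq lam (n + p) = betaSeq lam n * wprod lam n p ^ 2 := by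
  unfold betaSeq wprod
  rw [← Finset.prod_pow,
    show Finset.Icc 1 (n+p) = Finset.Ioc 0 (n+p) from Finset.Icc_add_one_left_eq_Ioc 0 _,
    show Finset.Icc 1 n = Finset.Ioc 0 n from Finset.Icc_add_one_left_eq_Ioc 0 _,
    show Finset.Icc (n+1) (n+p) = Finset.Ioc n (n+p) from Finset.Icc_add_one_left_eq_Ioc n _,
    ← Finset.prod_Ioc_consecutive _ (Nat.zero_le n) (Nat.le_add_right n p)]

lemma norm_stdVec (n : ℕ) : ‖stdVec n‖ = 1 := by
  have := lp.norm_single (p := 2) (E := fun _ : ℕ => ℂ) (by norm_num) n (1 : ℂ)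
  simpa [stdVec] using this

lemma inner_stdVec (a b : ℕ) :
    (inner ℂ (stdVec a) (stdVec b) : ℂ) = if a = b then 1 else 0 := by
  unfold stdVec
  rw [lp.inner_single_left]
  rcases eq_or_ne a b with h | h
  · subst h; simp [lp.single_apply_self, RCLike.inner_apply]
  · simp [lp.single_apply_ne _ _ _ h, RCLike.inner_apply, h]

lemma pow_stdVec {lam : ℕ → ℝ} {S : ellTwo →L[ℂ] ellTwo} (hS : IsWeightedShift lam S)
    (p n : ℕ) : (S ^ p) (stdVec n) = ((wprod lam n p : ℝ) : ℂ) • stdVec (n + p) := by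
  induction p with
  | zero => simp [wprod]
  | succ p ih =>
      rw [pow_succ', ContinuousLinearMap.mul_apply, ih, map_smul, hS (n + p), smul_smul,
        show wprod lam n (p + 1) = wprod lam n p * lam (n + p + 1) by
          unfold wprod
          rw [show n + (p+1) = (n+p)+1 from rfl, Finset.prod_Icc_succ_top (by omega)]]
      push_cast
      ring_nf

lemma adjoint_pow (S : ellTwo →L[ℂ] ellTwo) (q : ℕ) :
    ContinuousLinearMap.adjoint S ^ q = ContinuousLinearMap.adjoint (S ^ q) := by
  rw [← ContinuousLinearMap.star_eq_adjoint, ← ContinuousLinearMap.star_eq_adjoint, star_pow]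

/-- The matrix entries of `S*^k B_m(S) S^k` in the standard basis. -/
lemma entry {lam : ℕ → ℝ} {S : ellTwo →L[ℂ] ellTwo} (hS : IsWeightedShift lam S)
    (k m a b : ℕ) :
    (inner ℂ (stdVec b) ((ContinuousLinearMap.adjoint S ^ k * Bop m S * S ^ k) (stdVec a)) : ℂ)
      = if b = a then
          ((∑ j ∈ Finset.range (m + 1),
            (-1 : ℝ) ^ j * (m.choose j : ℝ) * wprod lam a (m - j + k) ^ 2 : ℝ) : ℂ)
        else 0 := by
  rw [ContinuousLinearMap.mul_apply, ContinuousLinearMap.mul_apply, adjoint_pow,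
    ContinuousLinearMap.adjoint_inner_right]
  unfold Bop
  rw [ContinuousLinearMap.sum_apply, inner_sum]
  have key : ∀ j ∈ Finset.range (m + 1),
      (inner ℂ ((S ^ k) (stdVec b))
        ((((-1 : ℂ) ^ j * (m.choose j : ℂ)) •
          ((ContinuousLinearMap.adjoint S) ^ (m - j) * S ^ (m - j))) ((S ^ k) (stdVec a))) : ℂ)
      = (if b = a then 1 else 0) * ((-1 : ℂ) ^ j * (m.choose j : ℂ)) *
          ((wprod lam b (m - j + k) : ℝ) : ℂ) * ((wprod lam a (m - j + k) : ℝ) : ℂ) := by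
    intro j _
    rw [ContinuousLinearMap.smul_apply, inner_smul_right, ContinuousLinearMap.mul_apply,
      adjoint_pow, ContinuousLinearMap.adjoint_inner_right, ← ContinuousLinearMap.mul_apply,
      ← ContinuousLinearMap.mul_apply, ← pow_add,
      pow_stdVec hS (m - j + k) b, pow_stdVec hS (m - j + k) a,
      inner_smul_left, inner_smul_right, inner_stdVec]
    rw [Complex.conj_ofReal]
    by_cases hba : b = a
    · simp [hba]; ring
    · rw [if_neg (by omega), if_neg hba]; ring
  rw [Finset.sum_congr rfl key]
  by_cases hba : b = a
  · subst hba
    simp only [if_pos rfl, one_mul]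
    push_cast
    apply Finset.sum_congr rfl
    intro j _
    ring
  · simp [hba]

/-- An operator on ℓ² all of whose matrix entries vanish is zero. -/
lemma eq_zero_of_entries (A : ellTwo →L[ℂ] ellTwo)
    (h : ∀ a b : ℕ, (inner ℂ (stdVec b) (A (stdVec a)) : ℂ) = 0) : A = 0 := by
  have hx : ∀ x : ellTwo, (∀ b : ℕ, (inner ℂ (stdVec b) x : ℂ) = 0) → x = 0 := by
    intro x hxb
    apply lp.ext
    funext b
    have := hxb b
    rw [stdVec, lp.inner_single_left, RCLike.inner_apply, map_one, mul_one] at this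
    simpa using this
  have hA : ∀ a : ℕ, A (stdVec a) = 0 := fun a => hx _ (fun b => h a b)
  refine ContinuousLinearMap.ext fun f => ?_
  rw [ContinuousLinearMap.zero_apply]
  have hsum := lp.hasSum_single (p := 2) ENNReal.ofNat_ne_top f
  have h2 := hsum.mapL A
  have h0 : ∀ i : ℕ, A (lp.single 2 i (f i)) = 0 := by
    intro i
    have e : lp.single 2 i (f i) = (f i) • stdVec i := by
      rw [stdVec, ← lp.single_smul]
      norm_num
    rw [e, map_smul, hA, smul_zero]
  have h3 : HasSum (fun _ : ℕ => (0 : ellTwo)) (A f) := by simpa [h0] using h2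
  exact h3.unique hasSum_zero

lemma reflect_sum (m a k : ℕ) (g : ℕ → ℝ) :
    ∑ j ∈ Finset.range (m + 1), (-1 : ℝ) ^ j * (m.choose j : ℝ) * g (a + (m - j + k))
      = (-1 : ℝ) ^ m *
        ∑ j ∈ Finset.range (m + 1), (-1 : ℝ) ^ j * (m.choose j : ℝ) * g (k + a + j) := by
  rw [Finset.mul_sum,
    ← Finset.sum_range_reflect
      (fun j => (-1 : ℝ) ^ j * (m.choose j : ℝ) * g (a + (m - j + k))) (m + 1)]
  apply Finset.sum_congr rfl
  intro j hj
  have hj' : j ≤ m := by simpa [Nat.lt_succ_iff] using hj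
  simp only [Nat.add_sub_cancel]
  rw [Nat.sub_sub_self hj', Nat.choose_symm hj',
    show a + (j + k) = k + a + j by omega]
  obtain ⟨i, rfl⟩ := Nat.exists_eq_add_of_le hj'
  rw [show j + i - j = i by omega]
  rw [pow_add]
  ring_nf
  rw [pow_mul']
  norm_num

/-- A unilateral weighted shift `S_λ` with bounded positive weights is `k`-quasi-`m`-isometric
iff `Σ_{j=0}^m (−1)^j C(m,j) ‖S_λ^{s+j} e_k‖² = 0` for all `s ≥ 0`, equivalently iff
`Σ_{j=0}^m (−1)^j C(m,j) (βλ)_{k+s+j} = 0` for all `s ≥ 0`. -/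
theorem stmt3 (lam : ℕ → ℝ) (hpos : ∀ n : ℕ, 0 < lam n) (hbdd : ∃ C : ℝ, ∀ n : ℕ, lam n ≤ C)
    (k m : ℕ) (hk : 1 ≤ k) (hm : 1 ≤ m)
    (S : ellTwo →L[ℂ] ellTwo) (hS : IsWeightedShift lam S) :
    (IsQuasiIsometric k m S ↔
      ∀ s : ℕ, ∑ j ∈ Finset.range (m + 1),
        (-1 : ℝ) ^ j * (m.choose j : ℝ) * ‖(S ^ (s + j)) (stdVec k)‖ ^ 2 = 0)
    ∧
    (IsQuasiIsometric k m S ↔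
      ∀ s : ℕ, ∑ j ∈ Finset.range (m + 1),
        (-1 : ℝ) ^ j * (m.choose j : ℝ) * betaSeq lam (k + s + j) = 0) := by
  have hbne : ∀ s, betaSeq lam s ≠ 0 := fun s => (betaSeq_pos hpos s).ne'
  set D : ℕ → ℝ := fun a => ∑ j ∈ Finset.range (m + 1),
      (-1 : ℝ) ^ j * (m.choose j : ℝ) * wprod lam a (m - j + k) ^ 2 with hD
  have step1 : IsQuasiIsometric k m S ↔ ∀ a, D a = 0 := by
    constructor
    · intro h a
      have h' : ContinuousLinearMap.adjoint S ^ k * Bop m S * S ^ k = 0 := h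
      have e := entry hS k m a a
      rw [h', ContinuousLinearMap.zero_apply, inner_zero_right, if_pos rfl] at e
      exact Complex.ofReal_eq_zero.mp e.symm
    · intro h
      show ContinuousLinearMap.adjoint S ^ k * Bop m S * S ^ k = 0
      apply eq_zero_of_entries
      intro a b
      rw [entry hS]
      by_cases hba : b = a
      · rw [if_pos hba]
        exact Complex.ofReal_eq_zero.mpr (h a)
      · rw [if_neg hba]
  have key : ∀ a, betaSeq lam a * D a
      = (-1 : ℝ) ^ m * ∑ j ∈ Finset.range (m + 1),
          (-1 : ℝ) ^ j * (m.choose j : ℝ) * betaSeq lam (k + a + j) := by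
    intro a
    rw [hD, ← reflect_sum m a k (betaSeq lam), Finset.mul_sum]
    apply Finset.sum_congr rfl
    intro j _
    rw [betaSeq_add lam a (m - j + k)]
    ring
  have step2 : (∀ a, D a = 0) ↔ (∀ s, ∑ j ∈ Finset.range (m + 1),
      (-1 : ℝ) ^ j * (m.choose j : ℝ) * betaSeq lam (k + s + j) = 0) := by
    have hm1 : ((-1 : ℝ) ^ m) ≠ 0 := pow_ne_zero _ (by norm_num)
    constructor
    · intro h s
      have e := key s
      rw [h s, mul_zero] at e
      exact (mul_eq_zero.mp e.symm).resolve_left hm1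
    · intro h a
      have e := key a
      rw [h a, mul_zero] at e
      exact (mul_eq_zero.mp e).resolve_left (hbne a)
  have normsq : ∀ s j : ℕ, ‖(S ^ (s + j)) (stdVec k)‖ ^ 2 = wprod lam k (s + j) ^ 2 := by
    intro s j
    rw [pow_stdVec hS, norm_smul, norm_stdVec, mul_one, Complex.norm_real,
      Real.norm_eq_abs, sq_abs]
  have step3 : (∀ s, ∑ j ∈ Finset.range (m + 1),
        (-1 : ℝ) ^ j * (m.choose j : ℝ) * ‖(S ^ (s + j)) (stdVec k)‖ ^ 2 = 0)
      ↔ (∀ s, ∑ j ∈ Finset.range (m + 1),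
        (-1 : ℝ) ^ j * (m.choose j : ℝ) * betaSeq lam (k + s + j) = 0) := by
    have keyk : ∀ s, betaSeq lam k * ∑ j ∈ Finset.range (m + 1),
        (-1 : ℝ) ^ j * (m.choose j : ℝ) * ‖(S ^ (s + j)) (stdVec k)‖ ^ 2
        = ∑ j ∈ Finset.range (m + 1),
            (-1 : ℝ) ^ j * (m.choose j : ℝ) * betaSeq lam (k + s + j) := by
      intro s
      rw [Finset.mul_sum]
      apply Finset.sum_congr rfl
      intro j _
      rw [normsq s j, show k + s + j = k + (s + j) by omega, betaSeq_add lam k (s + j)]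
      ring
    constructor
    · intro h s
      rw [← keyk s, h s, mul_zero]
    · intro h s
      have e := keyk s
      rw [h s] at e
      exact (mul_eq_zero.mp e).resolve_left (hbne k)
  exact ⟨step1.trans (step2.trans step3.symm), step1.trans step2⟩
end
end
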